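/- Let A, S, T be bounded operators on a complex Hilbert space H with A a positive contraction (0 ≤ A ≤ I). Then ω(SAT) ≤ (1/4)‖ |T|² + |S*|² ‖ + (1/2)ω(ST), where |X| = (X*X)^{1/2}. -/
import Mathlib


open scoped InnerProductSpace

noncomputable def numRadius {H : Type*} [NormedAddCommGroup H]
    [InnerProductSpace ℂ H] (T : H →L[ℂ] H) : ℝ :=
  ⨆ x : {x : H // ‖x‖ = 1}, ‖⟪T x, (x : H)⟫_ℂ‖

theorem numerical_radius_SAT {H : Type*} [NormedAddCommGroup H]
    [InnerProductSpace ℂ H] [CompleteSpace H] (A S T : H →L[ℂ] H)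
    (hA : A.IsPositive) (hA1 : ((1 : H →L[ℂ] H) - A).IsPositive) :
    numRadius (S * A * T) ≤
      (1 / 4) * ‖ContinuousLinearMap.adjoint T * T + S * ContinuousLinearMap.adjoint S‖ +
        (1 / 2) * numRadius (S * T) := by
  set N : H →L[ℂ] H := ContinuousLinearMap.adjoint T * T + S * ContinuousLinearMap.adjoint S
    with hN
  set B : H →L[ℂ] H := A + A - 1 with hB
  have hA1' : A ≤ (1 : H →L[ℂ] H) := by
    rw [ContinuousLinearMap.le_def]; exact hA1
  have hBsa : IsSelfAdjoint B :=
    (hA.isSelfAdjoint.add hA.isSelfAdjoint).sub (IsSelfAdjoint.one (H →L[ℂ] H))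
  have hBle : B ≤ (1 : H →L[ℂ] H) := by
    have h1 : (1 : H →L[ℂ] H) - B = (1 - A) + (1 - A) := by rw [hB]; abel
    have h2 : (0 : H →L[ℂ] H) ≤ (1 - A) + (1 - A) :=
      add_nonneg (sub_nonneg.mpr hA1') (sub_nonneg.mpr hA1')
    exact sub_nonneg.mp (h1 ▸ h2)
  have hBge : -(1 : H →L[ℂ] H) ≤ B := by
    have h1 : B - (-(1 : H →L[ℂ] H)) = A + A := by rw [hB]; abel
    have h2 : (0 : H →L[ℂ] H) ≤ A + A :=
      add_nonneg ((ContinuousLinearMap.nonneg_iff_isPositive A).mpr hA)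
        ((ContinuousLinearMap.nonneg_iff_isPositive A).mpr hA)
    exact sub_nonneg.mp (h1 ▸ h2)
  have hBnorm : ‖B‖ ≤ 1 := by
    rcases subsingleton_or_nontrivial (H →L[ℂ] H) with hsub | hnt
    · simp [Subsingleton.elim B 0]
    · rcases CStarAlgebra.norm_or_neg_norm_mem_spectrum (a := B) hBsa with h | h
      · exact (CFC.le_one_iff (R := ℝ) B hBsa).mp hBle ‖B‖ h
      · have h' : algebraMap ℝ (H →L[ℂ] H) (-1) ≤ B := by
          simpa using hBge
        have := (algebraMap_le_iff_le_spectrum (R := ℝ) (a := B) hBsa).mp h' (-‖B‖) h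
        linarith
  have hBpt : ∀ u : H, ‖B u‖ ≤ ‖u‖ := by
    intro u
    calc ‖B u‖ ≤ ‖B‖ * ‖u‖ := B.le_opNorm u
      _ ≤ 1 * ‖u‖ := mul_le_mul_of_nonneg_right hBnorm (norm_nonneg u)
      _ = ‖u‖ := one_mul _
  have hbdd : BddAbove (Set.range fun x : {x : H // ‖x‖ = 1} =>
      ‖⟪(S * T) (x : H), (x : H)⟫_ℂ‖) := by
    refine ⟨‖S * T‖, ?_⟩
    rintro r ⟨x, rfl⟩
    calc ‖⟪(S * T) (x : H), (x : H)⟫_ℂ‖ ≤ ‖(S * T) (x : H)‖ * ‖(x : H)‖ :=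
          norm_inner_le_norm _ _
      _ ≤ ‖S * T‖ * ‖(x : H)‖ * ‖(x : H)‖ :=
          mul_le_mul_of_nonneg_right ((S * T).le_opNorm _) (norm_nonneg _)
      _ = ‖S * T‖ := by rw [x.2]; ring
  have hnr0 : 0 ≤ numRadius (S * T) := Real.iSup_nonneg fun x => norm_nonneg _
  refine Real.iSup_le ?_ (by positivity)
  rintro ⟨x, hx⟩
  set u : H := T x with hu
  set w : H := (ContinuousLinearMap.adjoint S) x with hw
  have e1 : ⟪(S * A * T) x, x⟫_ℂ = ⟪A u, w⟫_ℂ := by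
    simp only [ContinuousLinearMap.mul_apply, hu, hw]
    exact (ContinuousLinearMap.adjoint_inner_right S (A (T x)) x).symm
  have e2 : ⟪u, w⟫_ℂ = ⟪(S * T) x, x⟫_ℂ := by
    simp only [ContinuousLinearMap.mul_apply, hu, hw]
    exact ContinuousLinearMap.adjoint_inner_right S (T x) x
  have e3 : ⟪B u, w⟫_ℂ + ⟪(S * T) x, x⟫_ℂ = 2 * ⟪A u, w⟫_ℂ := by
    rw [← e2, hB]
    simp only [ContinuousLinearMap.sub_apply, ContinuousLinearMap.add_apply,
      ContinuousLinearMap.one_apply, inner_sub_left, inner_add_left]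
    ring
  have n1 : ‖⟪B u, w⟫_ℂ‖ ≤ ‖u‖ * ‖w‖ :=
    (norm_inner_le_norm _ _).trans (mul_le_mul_of_nonneg_right (hBpt u) (norm_nonneg _))
  have eN : ⟪N x, x⟫_ℂ = ⟪u, u⟫_ℂ + ⟪w, w⟫_ℂ := by
    have hT' : ⟪(ContinuousLinearMap.adjoint T) (T x), x⟫_ℂ = ⟪u, u⟫_ℂ := by
      rw [ContinuousLinearMap.adjoint_inner_left]
    have hS' : ⟪S ((ContinuousLinearMap.adjoint S) x), x⟫_ℂ = ⟪w, w⟫_ℂ := by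
      rw [← ContinuousLinearMap.adjoint_inner_right]
    simp only [hN, ContinuousLinearMap.add_apply, ContinuousLinearMap.mul_apply, inner_add_left,
      hT', hS']
  have n2 : ‖u‖ ^ 2 + ‖w‖ ^ 2 ≤ ‖N‖ := by
    have h1 : ‖u‖ ^ 2 + ‖w‖ ^ 2 = Complex.re ⟪N x, x⟫_ℂ := by
      rw [eN]
      simp [inner_self_eq_norm_sq_to_K, ← Complex.ofReal_pow]
    calc ‖u‖ ^ 2 + ‖w‖ ^ 2 = Complex.re ⟪N x, x⟫_ℂ := h1
      _ ≤ ‖⟪N x, x⟫_ℂ‖ := Complex.re_le_norm _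
      _ ≤ ‖N x‖ * ‖x‖ := norm_inner_le_norm _ _
      _ ≤ ‖N‖ * ‖x‖ * ‖x‖ := mul_le_mul_of_nonneg_right (N.le_opNorm _) (norm_nonneg _)
      _ = ‖N‖ := by rw [hx]; ring
  have n3 : ‖⟪(S * T) x, x⟫_ℂ‖ ≤ numRadius (S * T) :=
    le_ciSup hbdd (⟨x, hx⟩ : {x : H // ‖x‖ = 1})
  have n4 : (2 : ℝ) * ‖⟪A u, w⟫_ℂ‖ ≤ ‖⟪B u, w⟫_ℂ‖ + ‖⟪(S * T) x, x⟫_ℂ‖ := by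
    calc (2 : ℝ) * ‖⟪A u, w⟫_ℂ‖ = ‖(2 : ℂ) * ⟪A u, w⟫_ℂ‖ := by
          rw [norm_mul]; norm_num
      _ = ‖⟪B u, w⟫_ℂ + ⟪(S * T) x, x⟫_ℂ‖ := by rw [e3]
      _ ≤ ‖⟪B u, w⟫_ℂ‖ + ‖⟪(S * T) x, x⟫_ℂ‖ := norm_add_le _ _
  have n5 : ‖u‖ * ‖w‖ ≤ (‖u‖ ^ 2 + ‖w‖ ^ 2) / 2 := by nlinarith [sq_nonneg (‖u‖ - ‖w‖)]
  rw [e1]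
  linarith
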